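/- For positive parameters L and a with L < a < 2L, let K ⊂ ℝⁿ be the union of the cube [−L, L]ⁿ with, for each coordinate i and sign ε, the convex hull of the point ε·a·e_i and the face {x : x_i = εL, |x_k| ≤ L for k ≠ i}. Then the projection K_i of K onto the first i coordinates has volume |K_i| = 2ⁱ·L^{i-1}·a, so the sequence (|K_i|)_{i=1}^n is geometric. -/

import Mathlib

open MeasureTheory

/-- Orthogonal projection of a set in `ℝⁿ` onto the span of the first `i`
standard basis vectors, identified with `ℝⁱ`. -/
def proj {n : ℕ} (i : ℕ) (h : i ≤ n) (K : Set (Fin n → ℝ)) : Set (Fin i → ℝ) :=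
  (fun x (j : Fin i) => x (Fin.castLE h j)) '' K

/-- The cap region for coordinate `j` and sign `ε`. -/
def capSet (i : ℕ) (L a ε : ℝ) (j : Fin i) : Set (Fin i → ℝ) :=
  {x | ε * x j ∈ Set.Icc L a ∧ ∀ k, k ≠ j → |x k| ≤ L * (a - ε * x j) / (a - L)}

theorem cap_eq (n : ℕ) (L a ε : ℝ) (hL : 0 < L) (hLa : L < a) (hε : ε = -1 ∨ ε = 1)
    (j : Fin n) :
    convexHull ℝ ({Pi.single j (ε * a)} ∪
        {x : Fin n → ℝ | x j = ε * L ∧ ∀ k, k ≠ j → |x k| ≤ L}) =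
      capSet n L a ε j := by
  have hε2 : ε * ε = 1 := by rcases hε with h | h <;> simp [h]
  have haL : (0:ℝ) < a - L := by linarith
  set F : Set (Fin n → ℝ) := {x : Fin n → ℝ | x j = ε * L ∧ ∀ k, k ≠ j → |x k| ≤ L} with hF
  have hFc : Convex ℝ F := by
    intro x hx y hy u v hu hv huv
    refine ⟨?_, ?_⟩
    · simp only [Pi.add_apply, Pi.smul_apply, smul_eq_mul]
      rw [hx.1, hy.1, ← add_mul, huv, one_mul]
    · intro k hk
      simp only [Pi.add_apply, Pi.smul_apply, smul_eq_mul]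
      calc |u * x k + v * y k| ≤ |u * x k| + |v * y k| := abs_add_le _ _
        _ = u * |x k| + v * |y k| := by
            rw [abs_mul, abs_mul, abs_of_nonneg hu, abs_of_nonneg hv]
        _ ≤ u * L + v * L := by
            have h1 := hx.2 k hk; have h2 := hy.2 k hk
            have h3 : u * |x k| ≤ u * L := by nlinarith
            have h4 : v * |y k| ≤ v * L := by nlinarith
            linarith
        _ = L := by rw [← add_mul, huv, one_mul]
  have hFne : F.Nonempty := by
    refine ⟨Pi.single j (ε * L), ?_, fun k hk => ?_⟩
    · simp
    · simp [Pi.single_eq_of_ne hk, hL.le]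
  rw [Set.singleton_union, convexHull_insert hFne, hFc.convexHull_eq]
  ext x
  rw [mem_convexJoin]
  constructor
  · rintro ⟨p, hp, y, hy, u, v, hu, hv, huv, rfl⟩
    rw [Set.mem_singleton_iff] at hp
    subst hp
    have hs : ε * (u • (Pi.single j (ε * a) : Fin n → ℝ) + v • y) j = u * a + v * L := by
      simp only [Pi.add_apply, Pi.smul_apply, smul_eq_mul, Pi.single_eq_same, hy.1]
      have : ε * (u * (ε * a) + v * (ε * L)) = (ε * ε) * (u * a + v * L) := by ring
      rw [this, hε2, one_mul]
    constructor
    · rw [hs]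
      constructor
      · nlinarith
      · nlinarith
    · intro k hk
      have hxk : (u • (Pi.single j (ε * a) : Fin n → ℝ) + v • y) k = v * y k := by
        simp [Pi.single_eq_of_ne hk]
      rw [hxk, hs]
      have hbd : a - (u * a + v * L) = v * (a - L) := by
        have : u = 1 - v := by linarith
        rw [this]; ring
      rw [hbd]
      rw [abs_mul, abs_of_nonneg hv]
      have h2 : |y k| ≤ L := hy.2 k hk
      calc v * |y k| ≤ v * L := by nlinarith
        _ = L * (v * (a - L)) / (a - L) := by field_simp
  · rintro ⟨⟨hs1, hs2⟩, hb⟩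
    set s := ε * x j with hsdef
    have hxj : x j = ε * s := by rw [hsdef, ← mul_assoc, hε2, one_mul]
    by_cases hsa : s = a
    · refine ⟨Pi.single j (ε * a), rfl, Pi.single j (ε * L),
        ⟨by simp, fun k hk => by simp [Pi.single_eq_of_ne hk, hL.le]⟩, ?_⟩
      have hx : x = Pi.single j (ε * a) := by
        funext k
        by_cases hk : k = j
        · subst hk; simp [hxj, hsa]
        · have hbk := hb k hk
          rw [hsa, sub_self, mul_zero, zero_div] at hbk
          have h0 : x k = 0 := abs_eq_zero.mp (le_antisymm hbk (abs_nonneg _))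
          rw [h0, Pi.single_eq_of_ne hk]
      rw [hx]
      exact left_mem_segment ℝ _ _
    · have hsa' : s < a := lt_of_le_of_ne hs2 hsa
      set v : ℝ := (a - s) / (a - L) with hv
      set u : ℝ := (s - L) / (a - L) with hu
      have hv0 : 0 < v := div_pos (by linarith) haL
      have hu0 : 0 ≤ u := div_nonneg (by linarith) haL.le
      have huv : u + v = 1 := by rw [hu, hv]; field_simp; ring
      set y : Fin n → ℝ := fun k => if k = j then ε * L else x k / v with hy
      refine ⟨Pi.single j (ε * a), rfl, y, ⟨?_, ?_⟩, u, v, hu0, hv0.le, huv, ?_⟩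
      · simp [hy]
      · intro k hk
        simp only [hy, if_neg hk]
        rw [abs_div, abs_of_pos hv0, div_le_iff₀ hv0]
        have := hb k hk
        calc |x k| ≤ L * (a - s) / (a - L) := this
          _ = L * v := by rw [hv]; ring
      · funext k
        by_cases hk : k = j
        · subst hk
          simp only [Pi.add_apply, Pi.smul_apply, smul_eq_mul, Pi.single_eq_same, hy]
          simp only [if_true]
          have hsum : u * a + v * L = s := by rw [hu, hv]; field_simp; ring
          rw [hxj, ← hsum]; ring
        · simp only [Pi.add_apply, Pi.smul_apply, smul_eq_mul, Pi.single_eq_of_ne hk, hy,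
            if_neg hk, mul_zero, zero_add]
          field_simp

theorem proj_K (n : ℕ) (L a : ℝ) (hL : 0 < L) (hLa : L < a) (i : ℕ) (hi : i ≤ n) :
    proj i hi (Set.Icc (fun _ => -L) (fun _ => L) ∪
        ⋃ (j : Fin n) (ε : ℝ) (_ : ε = -1 ∨ ε = 1), capSet n L a ε j) =
      Set.Icc (fun _ => -L) (fun _ => L) ∪
        ⋃ (j : Fin i) (ε : ℝ) (_ : ε = -1 ∨ ε = 1), capSet i L a ε j := by
  have haL : (0:ℝ) < a - L := by linarith
  set π : (Fin n → ℝ) → (Fin i → ℝ) := fun x (j : Fin i) => x (Fin.castLE hi j) with hπ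
  set ext : (Fin i → ℝ) → (Fin n → ℝ) :=
    fun x k => if h : k.val < i then x ⟨k.val, h⟩ else 0 with hext
  have hextc : ∀ (x : Fin i → ℝ) (j : Fin i), ext x (Fin.castLE hi j) = x j := by
    intro x j
    show (if h : ((Fin.castLE hi j : Fin n) : ℕ) < i
      then x ⟨((Fin.castLE hi j : Fin n) : ℕ), h⟩ else 0) = x j
    rw [dif_pos (show ((Fin.castLE hi j : Fin n) : ℕ) < i from j.isLt)]
    exact congrArg x (Fin.ext rfl)
  have hπext : ∀ x, π (ext x) = x := by
    intro x; funext j; exact hextc x j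
  have claimA : π '' Set.Icc (fun _ => -L) (fun _ => L) =
      Set.Icc (fun (_ : Fin i) => -L) (fun _ => L) := by
    apply Set.Subset.antisymm
    · rintro _ ⟨x, hx, rfl⟩
      exact ⟨fun j => hx.1 (Fin.castLE hi j), fun j => hx.2 (Fin.castLE hi j)⟩
    · intro x hx
      refine ⟨ext x, ⟨fun k => ?_, fun k => ?_⟩, hπext x⟩
      · simp only [hext]
        by_cases h : k.val < i
        · rw [dif_pos h]; exact hx.1 _
        · rw [dif_neg h]; linarith
      · simp only [hext]
        by_cases h : k.val < i
        · rw [dif_pos h]; exact hx.2 _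
        · rw [dif_neg h]; linarith
  have claimB : ∀ (j : Fin i) (ε : ℝ),
      π '' capSet n L a ε (Fin.castLE hi j) = capSet i L a ε j := by
    intro j ε
    apply Set.Subset.antisymm
    · rintro _ ⟨x, ⟨hx1, hx2⟩, rfl⟩
      refine ⟨hx1, fun k hk => ?_⟩
      apply hx2
      intro h
      exact hk (Fin.castLE_injective hi h)
    · rintro x ⟨hx1, hx2⟩
      refine ⟨ext x, ⟨?_, fun k hk => ?_⟩, hπext x⟩
      · rw [hextc x j]; exact hx1
      · rw [hextc x j]
        simp only [hext]
        by_cases h : k.val < i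
        · rw [dif_pos h]
          apply hx2
          intro he
          apply hk
          exact Fin.ext (by simpa using congrArg Fin.val he)
        · rw [dif_neg h, abs_zero]
          have : ε * x j ≤ a := hx1.2
          exact div_nonneg (mul_nonneg hL.le (by linarith)) haL.le
  have claimC : ∀ (j : Fin n), ¬ j.val < i → ∀ (ε : ℝ),
      π '' capSet n L a ε j ⊆ Set.Icc (fun (_ : Fin i) => -L) (fun _ => L) := by
    rintro j hj ε _ ⟨x, ⟨hx1, hx2⟩, rfl⟩
    have key : ∀ k : Fin i, |x (Fin.castLE hi k)| ≤ L := by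
      intro k
      have hne : Fin.castLE hi k ≠ j := by
        intro h
        apply hj
        rw [← congrArg Fin.val h]
        exact k.isLt
      calc |x (Fin.castLE hi k)| ≤ L * (a - ε * x j) / (a - L) := hx2 _ hne
        _ ≤ L := by
            rw [div_le_iff₀ haL]
            nlinarith [hx1.1]
    exact ⟨fun k => (abs_le.mp (key k)).1, fun k => (abs_le.mp (key k)).2⟩
  unfold proj
  rw [Set.image_union]
  simp only [Set.image_iUnion]
  apply Set.Subset.antisymm
  · apply Set.union_subset
    · rw [claimA]; exact Set.subset_union_left
    · apply Set.iUnion_subset; intro j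
      apply Set.iUnion_subset; intro ε
      apply Set.iUnion_subset; intro hε
      by_cases h : j.val < i
      · have hj : j = Fin.castLE hi (⟨j.val, h⟩ : Fin i) := Fin.ext rfl
        rw [hj, claimB (⟨j.val, h⟩ : Fin i) ε]
        refine Set.subset_union_of_subset_right ?_ _
        exact Set.subset_iUnion_of_subset (⟨j.val, h⟩ : Fin i)
          (Set.subset_iUnion_of_subset ε (Set.subset_iUnion
            (fun _ : ε = -1 ∨ ε = 1 => capSet i L a ε (⟨j.val, h⟩ : Fin i)) hε))
      · exact (claimC j h ε).trans Set.subset_union_left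
  · apply Set.union_subset
    · rw [← claimA]; exact Set.subset_union_left
    · apply Set.iUnion_subset; intro j
      apply Set.iUnion_subset; intro ε
      apply Set.iUnion_subset; intro hε
      rw [← claimB j ε]
      refine Set.subset_union_of_subset_right ?_ _
      exact Set.subset_iUnion_of_subset (Fin.castLE hi j)
        (Set.subset_iUnion_of_subset ε (Set.subset_iUnion
          (fun _ : ε = -1 ∨ ε = 1 =>
            (fun x (j : Fin i) => x (Fin.castLE hi j)) '' capSet n L a ε (Fin.castLE hi j)) hε))

lemma key_int1 (c d C : ℝ) (m : ℕ) :
    ∫ s in c..d, (C * (d - s))^m = C^m * ((d-c)^(m+1)/(m+1)) := by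
  simp only [mul_pow]
  rw [intervalIntegral.integral_const_mul]
  congr 1
  rw [intervalIntegral.integral_comp_sub_left (fun x => x ^ m) d, sub_self, integral_pow]
  simp

lemma key_int2 (c d C : ℝ) (m : ℕ) :
    ∫ s in c..d, (C * (s - c))^m = C^m * ((d-c)^(m+1)/(m+1)) := by
  simp only [mul_pow]
  rw [intervalIntegral.integral_const_mul]
  congr 1
  rw [intervalIntegral.integral_comp_sub_right (fun x => x ^ m) c, sub_self, integral_pow]
  simp

theorem capSet_volume (m : ℕ) (L a : ℝ) (hL : 0 < L) (hLa : L < a) (ε : ℝ)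
    (hε : ε = -1 ∨ ε = 1) (j : Fin (m+1)) :
    volume (capSet (m+1) L a ε j) =
      ENNReal.ofReal ((2*L)^m * (a - L) / (m+1)) := by
  have haL : (0:ℝ) < a - L := by linarith
  set r : ℝ → ℝ := fun s => L * (a - ε * s) / (a - L) with hr
  set T : Set (ℝ × (Fin m → ℝ)) :=
    {p | ε * p.1 ∈ Set.Icc L a ∧ ∀ k, |p.2 k| ≤ r p.1} with hT
  have hTm : MeasurableSet T := by
    have : T = {p : ℝ × (Fin m → ℝ) | ε * p.1 ∈ Set.Icc L a} ∩
        {p : ℝ × (Fin m → ℝ) | ∀ k, |p.2 k| ≤ r p.1} := rfl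
    rw [this]
    apply MeasurableSet.inter
    · exact measurableSet_Icc.preimage (by fun_prop)
    · rw [Set.setOf_forall]
      exact MeasurableSet.iInter fun k => measurableSet_le (by fun_prop) (by fun_prop)
  set e := MeasurableEquiv.piFinSuccAbove (fun _ : Fin (m+1) => ℝ) j with he
  have hcap : capSet (m+1) L a ε j = e ⁻¹' T := by
    ext x
    constructor
    · rintro ⟨hx1, hx2⟩
      exact ⟨hx1, fun k => hx2 _ (j.succAbove_ne k)⟩
    · rintro ⟨h1, h2⟩
      refine ⟨h1, fun k hk => ?_⟩
      obtain ⟨l, rfl⟩ := Fin.exists_succAbove_eq hk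
      exact h2 l
  have hmp := measurePreserving_piFinSuccAbove (fun _ : Fin (m+1) => (volume : Measure ℝ)) j
  rw [hcap, volume_pi, hmp.measure_preimage hTm.nullMeasurableSet, ← volume_pi,
    ← Measure.volume_eq_prod, Measure.volume_eq_prod, Measure.prod_apply hTm]
  set A : Set ℝ := {s | ε * s ∈ Set.Icc L a} with hA
  have hAm : MeasurableSet A := measurableSet_Icc.preimage (by fun_prop)
  have hslice : ∀ s : ℝ, volume (Prod.mk s ⁻¹' T) =
      Set.indicator A (fun s => ENNReal.ofReal ((2 * r s)^m)) s := by
    intro s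
    by_cases hs : s ∈ A
    · have hr0 : 0 ≤ r s := by
        have : ε * s ≤ a := hs.2
        exact div_nonneg (mul_nonneg hL.le (by linarith)) haL.le
      have : Prod.mk s ⁻¹' T = Set.pi Set.univ (fun _ : Fin m => Set.Icc (-(r s)) (r s)) := by
        ext y
        simp only [Set.mem_preimage, hT, Set.mem_setOf_eq, Set.mem_pi, Set.mem_univ,
          Set.mem_Icc, true_implies, forall_const]
        constructor
        · rintro ⟨_, h2⟩ k; exact abs_le.mp (h2 k)
        · intro h; exact ⟨hs, fun k => abs_le.mpr (h k)⟩
      rw [this, volume_pi_pi, Set.indicator_of_mem hs]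
      simp only [Real.volume_Icc]
      rw [Finset.prod_const, Finset.card_univ, Fintype.card_fin,
        ← ENNReal.ofReal_pow (by linarith)]
      congr 2
      ring
    · have : Prod.mk s ⁻¹' T = ∅ := by
        ext y
        simp only [Set.mem_preimage, hT, Set.mem_setOf_eq, Set.mem_empty_iff_false, iff_false]
        rintro ⟨h1, _⟩
        exact hs h1
      rw [this, Set.indicator_of_notMem hs, measure_empty]
  rw [lintegral_congr hslice, lintegral_indicator hAm]
  obtain ⟨c, d, hcd, hAeq, hIval⟩ : ∃ c d : ℝ, c ≤ d ∧ A = Set.Icc c d ∧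
      ∫ s in c..d, (2 * r s)^m = (2*L/(a-L))^m * ((a-L)^(m+1)/(m+1)) := by
    rcases hε with rfl | rfl
    · refine ⟨-a, -L, by linarith, ?_, ?_⟩
      · ext s
        simp only [hA, Set.mem_setOf_eq, Set.mem_Icc]
        constructor
        · rintro ⟨h1, h2⟩; constructor <;> nlinarith
        · rintro ⟨h1, h2⟩; constructor <;> nlinarith
      · calc ∫ s in (-a)..(-L), (2 * r s)^m
            = ∫ s in (-a)..(-L), ((2*L/(a-L)) * (s - (-a)))^m := by
              apply intervalIntegral.integral_congr
              intro s _
              rw [hr]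
              field_simp
              ring_nf
          _ = (2*L/(a-L))^m * (((-L) - (-a))^(m+1)/(m+1)) := key_int2 _ _ _ m
          _ = (2*L/(a-L))^m * ((a-L)^(m+1)/(m+1)) := by ring_nf
    · refine ⟨L, a, hLa.le, ?_, ?_⟩
      · ext s
        simp only [hA, Set.mem_setOf_eq, Set.mem_Icc, one_mul]
      · rw [← key_int1 L a (2*L/(a-L)) m]
        apply intervalIntegral.integral_congr
        intro s _
        rw [hr]
        field_simp
  have hnn : ∀ s ∈ Set.Icc c d, (0:ℝ) ≤ (2 * r s)^m := by
    intro s hs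
    rw [← hAeq] at hs
    have h2 : ε * s ≤ a := hs.2
    have : 0 ≤ r s := div_nonneg (mul_nonneg hL.le (by linarith)) haL.le
    positivity
  rw [hAeq]
  have hInt : IntegrableOn (fun s => (2 * r s)^m) (Set.Icc c d) := by
    apply Continuous.integrableOn_Icc
    fun_prop
  rw [← ofReal_integral_eq_lintegral_ofReal hInt
    ((ae_restrict_iff' measurableSet_Icc).2 (ae_of_all _ hnn))]
  rw [MeasureTheory.integral_Icc_eq_integral_Ioc, ← intervalIntegral.integral_of_le hcd, hIval]
  congr 1
  rw [div_pow, div_mul_div_comm, pow_succ, div_eq_div_iff (by positivity) (by positivity)]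
  ring

lemma capSet_meas (i : ℕ) (L a ε : ℝ) (j : Fin i) : MeasurableSet (capSet i L a ε j) := by
  have : capSet i L a ε j = {x : Fin i → ℝ | ε * x j ∈ Set.Icc L a} ∩
      ⋂ (k) (_ : k ≠ j), {x : Fin i → ℝ | |x k| ≤ L * (a - ε * x j)/(a-L)} := by
    ext x
    simp only [capSet, Set.mem_setOf_eq, Set.mem_inter_iff, Set.mem_iInter]
  rw [this]
  apply MeasurableSet.inter
  · exact measurableSet_Icc.preimage (by fun_prop)
  · exact MeasurableSet.iInter fun k => MeasurableSet.iInter fun _ =>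
      measurableSet_le (by fun_prop) (by fun_prop)

lemma hyperplane_null (i : ℕ) (j : Fin i) (c : ℝ) :
    volume {x : Fin i → ℝ | x j = c} = 0 := by
  have : {x : Fin i → ℝ | x j = c} =
      Set.pi Set.univ (fun k => if k = j then {c} else Set.univ) := by
    ext x
    simp only [Set.mem_setOf_eq, Set.mem_pi, Set.mem_univ, true_implies]
    constructor
    · intro h k
      by_cases hk : k = j
      · subst hk; simp [h]
      · simp [hk]
    · intro h
      have := h j
      simpa using this
  rw [this, volume_pi_pi]
  apply Finset.prod_eq_zero (Finset.mem_univ j)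
  simp

lemma capAbs {i : ℕ} {L a ε : ℝ} (hL : 0 < L) (hLa : L < a) {j k : Fin i} (hk : k ≠ j)
    {x : Fin i → ℝ} (hx : x ∈ capSet i L a ε j) : |x k| ≤ L := by
  have h := hx.2 k hk
  have h1 : L ≤ ε * x j := hx.1.1
  calc |x k| ≤ L * (a - ε * x j) / (a - L) := h
    _ ≤ L := by
        rw [div_le_iff₀ (by linarith)]
        nlinarith

/-- The cube `[-L, L]ⁿ` with a pyramidal cap (with apex `ε·a·e_i`) on each face
has geometric sequence of projection volumes `|K_i| = 2ⁱ L^{i-1} a`. -/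
theorem geometric_volumes (n : ℕ) (L a : ℝ) (hL : 0 < L) (hLa : L < a) (haL : a < 2 * L)
    (K : Set (Fin n → ℝ))
    (hK : K = Set.Icc (fun _ => -L) (fun _ => L) ∪
      ⋃ (i : Fin n) (ε : ℝ) (_ : ε = -1 ∨ ε = 1),
        convexHull ℝ ({Pi.single i (ε * a)} ∪
          {x : Fin n → ℝ | x i = ε * L ∧ ∀ k, k ≠ i → |x k| ≤ L})) :
    ∀ i (h1 : 1 ≤ i) (hi : i ≤ n),
      (volume (proj i hi K)).toReal = 2 ^ i * L ^ (i - 1) * a := by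
  intro i h1 hi
  obtain ⟨m, rfl⟩ : ∃ m, i = m + 1 := ⟨i - 1, (Nat.succ_pred_eq_of_pos h1).symm⟩
  have haL2 : (0:ℝ) < a - L := by linarith
  have hK' : K = Set.Icc (fun _ => -L) (fun _ => L) ∪
      ⋃ (j : Fin n) (ε : ℝ) (_ : ε = -1 ∨ ε = 1), capSet n L a ε j := by
    rw [hK]
    congr 1
    apply Set.iUnion_congr; intro j
    apply Set.iUnion_congr; intro ε
    apply Set.iUnion_congr; intro hε
    exact cap_eq n L a ε hL hLa hε j
  rw [hK', proj_K n L a hL hLa (m+1) hi]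
  set f : Option (Fin (m+1) × Bool) → Set (Fin (m+1) → ℝ) := fun o =>
    Option.elim o (Set.Icc (fun _ => -L) (fun _ => L))
      (fun p => cond p.2 (capSet (m+1) L a 1 p.1) (capSet (m+1) L a (-1) p.1)) with hf
  have hTf : (Set.Icc (fun (_ : Fin (m+1)) => -L) (fun _ => L) ∪
      ⋃ (j : Fin (m+1)) (ε : ℝ) (_ : ε = -1 ∨ ε = 1), capSet (m+1) L a ε j) = ⋃ o, f o := by
    rw [Set.iUnion_option]
    congr 1
    apply Set.Subset.antisymm
    · refine Set.iUnion_subset fun j => Set.iUnion_subset fun ε => Set.iUnion_subset fun hε => ?_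
      rcases hε with rfl | rfl
      · exact Set.subset_iUnion_of_subset (j, false) (subset_refl _)
      · exact Set.subset_iUnion_of_subset (j, true) (subset_refl _)
    · refine Set.iUnion_subset fun p => ?_
      rcases p with ⟨j, b⟩
      cases b
      · exact Set.subset_iUnion_of_subset j (Set.subset_iUnion_of_subset (-1)
          (Set.subset_iUnion
            (fun _ : (-1:ℝ) = -1 ∨ (-1:ℝ) = 1 => capSet (m+1) L a (-1) j) (Or.inl rfl)))
      · exact Set.subset_iUnion_of_subset j (Set.subset_iUnion_of_subset (1 : ℝ)
          (Set.subset_iUnion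
            (fun _ : (1:ℝ) = -1 ∨ (1:ℝ) = 1 => capSet (m+1) L a 1 j) (Or.inr rfl)))
  rw [hTf]
  have hm : ∀ o, NullMeasurableSet (f o) volume := by
    rintro (_ | ⟨j, b⟩)
    · exact measurableSet_Icc.nullMeasurableSet
    · cases b
      · exact (capSet_meas (m+1) L a (-1) j).nullMeasurableSet
      · exact (capSet_meas (m+1) L a 1 j).nullMeasurableSet
  have hcube_cap : ∀ (j : Fin (m+1)) (ε : ℝ), ε = -1 ∨ ε = 1 →
      volume (Set.Icc (fun (_ : Fin (m+1)) => -L) (fun _ => L) ∩ capSet (m+1) L a ε j) = 0 := by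
    intro j ε hε
    refine measure_mono_null ?_ (hyperplane_null (m+1) j (ε * L))
    · rintro x ⟨hx1, hx2⟩
      have hj1 : -L ≤ x j := hx1.1 j
      have hj2 : x j ≤ L := hx1.2 j
      have h2 : L ≤ ε * x j := hx2.1.1
      show x j = ε * L
      rcases hε with rfl | rfl
      · linarith
      · linarith
  have hcap_cap : ∀ (j j' : Fin (m+1)) (ε ε' : ℝ), ε = -1 ∨ ε = 1 → ε' = -1 ∨ ε' = 1 →
      j ≠ j' → volume (capSet (m+1) L a ε j ∩ capSet (m+1) L a ε' j') = 0 := by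
    intro j j' ε ε' hε hε' hjj
    refine measure_mono_null ?_
      (measure_union_null (hyperplane_null (m+1) j' L) (hyperplane_null (m+1) j' (-L)))
    · rintro x ⟨hx1, hx2⟩
      have hle : |x j'| ≤ L := capAbs hL hLa (Ne.symm hjj) hx1
      have h2 : L ≤ ε' * x j' := hx2.1.1
      have hge : L ≤ |x j'| := by
        rcases hε' with rfl | rfl
        · calc L ≤ -1 * x j' := h2
            _ = -(x j') := by ring
            _ ≤ |x j'| := neg_le_abs _
        · calc L ≤ 1 * x j' := h2
            _ ≤ |x j'| := by rw [one_mul]; exact le_abs_self _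
      have : |x j'| = L := le_antisymm hle hge
      rcases abs_eq hL.le |>.mp this with h | h
      · exact Or.inl h
      · exact Or.inr h
  have hd : Pairwise (Function.onFun (AEDisjoint volume) f) := by
    rintro (_ | ⟨j, b⟩) (_ | ⟨j', b'⟩) hne
    · exact absurd rfl hne
    · show volume (Set.Icc _ _ ∩ cond b' _ _) = 0
      cases b'
      · exact hcube_cap j' (-1) (Or.inl rfl)
      · exact hcube_cap j' 1 (Or.inr rfl)
    · show volume (cond b _ _ ∩ Set.Icc _ _) = 0
      rw [Set.inter_comm]
      cases b
      · exact hcube_cap j (-1) (Or.inl rfl)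
      · exact hcube_cap j 1 (Or.inr rfl)
    · show volume (cond b _ _ ∩ cond b' _ _) = 0
      by_cases hjj : j = j'
      · subst hjj
        have hbb : b ≠ b' := fun h => hne (by rw [h])
        have hempty : ∀ x : Fin (m+1) → ℝ,
            x ∈ (cond b (capSet (m+1) L a 1 j) (capSet (m+1) L a (-1) j) ∩
              cond b' (capSet (m+1) L a 1 j) (capSet (m+1) L a (-1) j)) → False := by
          rintro x ⟨hx1, hx2⟩
          cases b <;> cases b'
          · exact hbb rfl
          · have h1 : L ≤ -1 * x j := hx1.1.1
            have h2 : L ≤ 1 * x j := hx2.1.1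
            linarith
          · have h1 : L ≤ 1 * x j := hx1.1.1
            have h2 : L ≤ -1 * x j := hx2.1.1
            linarith
          · exact hbb rfl
        have : (cond b (capSet (m+1) L a 1 j) (capSet (m+1) L a (-1) j) ∩
            cond b' (capSet (m+1) L a 1 j) (capSet (m+1) L a (-1) j)) = ∅ :=
          Set.eq_empty_iff_forall_notMem.mpr fun x hx => hempty x hx
        rw [this, measure_empty]
      · cases b <;> cases b'
        · exact hcap_cap j j' (-1) (-1) (Or.inl rfl) (Or.inl rfl) hjj
        · exact hcap_cap j j' (-1) 1 (Or.inl rfl) (Or.inr rfl) hjj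
        · exact hcap_cap j j' 1 (-1) (Or.inr rfl) (Or.inl rfl) hjj
        · exact hcap_cap j j' 1 1 (Or.inr rfl) (Or.inr rfl) hjj
  rw [measure_iUnion₀ hd hm, tsum_fintype, Fintype.sum_option]
  have hcube : volume (Set.Icc (fun (_ : Fin (m+1)) => -L) (fun _ => L)) =
      ENNReal.ofReal ((2*L)^(m+1)) := by
    rw [Real.volume_Icc_pi, Finset.prod_const, Finset.card_univ, Fintype.card_fin,
      ← ENNReal.ofReal_pow (by linarith)]
    congr 1
    ring
  have hcapv : ∀ p : Fin (m+1) × Bool, volume (f (some p)) =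
      ENNReal.ofReal ((2*L)^m * (a - L) / (m+1)) := by
    rintro ⟨j, b⟩
    cases b
    · exact capSet_volume m L a hL hLa (-1) (Or.inl rfl) j
    · exact capSet_volume m L a hL hLa 1 (Or.inr rfl) j
  have hfn : volume (f none) = ENNReal.ofReal ((2*L)^(m+1)) := hcube
  rw [hfn, Finset.sum_congr rfl (fun p _ => hcapv p), Finset.sum_const, Finset.card_univ]
  have hcard : Fintype.card (Fin (m+1) × Bool) = 2 * (m+1) := by
    simp [Fintype.card_prod, mul_comm]
  rw [hcard, nsmul_eq_mul, ← ENNReal.ofReal_natCast (2 * (m+1)),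
    ← ENNReal.ofReal_mul (by positivity), ← ENNReal.ofReal_add (by positivity) ?hnn,
    ENNReal.toReal_ofReal ?hnn2]
  case hnn =>
    have : (0:ℝ) ≤ (2*L)^m * (a - L) / (m+1) := by positivity
    positivity
  case hnn2 =>
    have h1 : (0:ℝ) ≤ (2*L)^(m+1) := by positivity
    have h2 : (0:ℝ) ≤ ((2 * (m+1) : ℕ) : ℝ) * ((2*L)^m * (a - L) / (m+1)) := by positivity
    linarith
  have hm1 : ((m:ℝ) + 1) ≠ 0 := by positivity
  have hsub : (m + 1) - 1 = m := by omega
  rw [hsub]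
  push_cast
  field_simp
  ring
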